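/- Let T ≥ 1 be an integer and Φ_T = h^T ∘ g̃. Suppose there exists an n×q real matrix K̃ such that the spectral radius of A^T (I − K̃ C) is strictly less than 1 (detectability of (C, A^T)). Then the sequence of iterates Φ_T^l(0), l ≥ 0, is bounded above in the Loewner order: there exists a symmetric positive semidefinite matrix M with Φ_T^l(0) ≤ M for all l. -/

import Mathlib

open Matrix Filter
open scoped ENNReal NNReal

namespace Stmt9Aux

variable {n q : ℕ}

lemma psd_congr {m p : ℕ} {X : Matrix (Fin m) (Fin m) ℝ} (hX : X.PosSemidef)
    (B : Matrix (Fin p) (Fin m) ℝ) : (B * X * Bᵀ).PosSemidef := by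
  have := hX.mul_mul_conjTranspose_same B
  rwa [conjTranspose_eq_transpose_of_trivial] at this

lemma real_symm {m : ℕ} {P : Matrix (Fin m) (Fin m) ℝ} (hP : P.IsHermitian) : Pᵀ = P :=
  (conjTranspose_eq_transpose_of_trivial P) ▸ hP.eq

lemma psd_entry_bound_smul_one_sub (P : Matrix (Fin n) (Fin n) ℝ) (hP : P.IsHermitian)
    (c : ℝ) (hc : ∀ i j, |P i j| ≤ c) :
    (((n : ℝ) * c) • (1 : Matrix (Fin n) (Fin n) ℝ) - P).PosSemidef := by
  rcases Nat.eq_zero_or_pos n with hn | hn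
  · subst hn
    rw [posSemidef_iff_dotProduct_mulVec]
    constructor
    · ext i j; exact absurd i.2 (by omega)
    · intro x
      simp [dotProduct]
  have hc0 : 0 ≤ c := le_trans (abs_nonneg _) (hc ⟨0, hn⟩ ⟨0, hn⟩)
  rw [posSemidef_iff_dotProduct_mulVec]
  constructor
  · refine IsHermitian.sub ?_ hP
    unfold Matrix.IsHermitian
    simp [conjTranspose_smul, conjTranspose_eq_transpose_of_trivial]
  · intro x
    simp only [star_trivial, sub_mulVec, dotProduct_sub, smul_mulVec, one_mulVec,
      dotProduct_smul, smul_eq_mul, sub_nonneg]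
    have h1 : x ⬝ᵥ P *ᵥ x ≤ c * (∑ i, |x i|) ^ 2 := by
      have hterm : ∀ i j, x i * (P i j * x j) ≤ |x i| * c * |x j| := by
        intro i j
        calc x i * (P i j * x j) ≤ |x i * (P i j * x j)| := le_abs_self _
        _ = |x i| * |P i j| * |x j| := by rw [abs_mul, abs_mul, mul_assoc]
        _ ≤ |x i| * c * |x j| := by
            apply mul_le_mul_of_nonneg_right _ (abs_nonneg _)
            exact mul_le_mul_of_nonneg_left (hc i j) (abs_nonneg _)
      calc x ⬝ᵥ P *ᵥ x = ∑ i, ∑ j, x i * (P i j * x j) := by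
            simp [dotProduct, mulVec, dotProduct, Finset.mul_sum]
        _ ≤ ∑ i, ∑ j, |x i| * c * |x j| :=
            Finset.sum_le_sum fun i _ => Finset.sum_le_sum fun j _ => hterm i j
        _ = c * (∑ i, |x i|) ^ 2 := by
            rw [sq, Finset.sum_mul_sum, Finset.mul_sum]
            refine Finset.sum_congr rfl fun i _ => ?_
            rw [Finset.mul_sum]
            exact Finset.sum_congr rfl fun j _ => by ring
    have h2 : (∑ i, |x i|) ^ 2 ≤ (n : ℝ) * ∑ i, x i ^ 2 := by
      have := sq_sum_le_card_mul_sum_sq (s := (Finset.univ : Finset (Fin n)))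
        (f := fun i => |x i|)
      simpa [sq_abs] using this
    have h3 : x ⬝ᵥ x = ∑ i, x i ^ 2 := by simp [dotProduct, sq]
    calc x ⬝ᵥ P *ᵥ x ≤ c * (∑ i, |x i|) ^ 2 := h1
      _ ≤ c * ((n:ℝ) * ∑ i, x i ^ 2) := mul_le_mul_of_nonneg_left h2 hc0
      _ = (n:ℝ) * c * (x ⬝ᵥ x) := by rw [h3]; ring

lemma ric_id1 (C : Matrix (Fin q) (Fin n) ℝ) (R : Matrix (Fin q) (Fin q) ℝ)
    (X : Matrix (Fin n) (Fin n) ℝ) (Sq : Matrix (Fin q) (Fin q) ℝ)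
    (hXT : Xᵀ = X) (hSi : Sq⁻¹ᵀ = Sq⁻¹) (h1 : Sq * Sq⁻¹ = 1) (h2 : Sq⁻¹ * Sq = 1)
    (hSdef : Sq = C * X * Cᵀ + R) :
    X - X * Cᵀ * Sq⁻¹ * C * X =
      (1 - (X * Cᵀ * Sq⁻¹) * C) * X * (1 - (X * Cᵀ * Sq⁻¹) * C)ᵀ
        + (X * Cᵀ * Sq⁻¹) * R * (X * Cᵀ * Sq⁻¹)ᵀ := by
  have hcan : ∀ Y : Matrix (Fin q) (Fin n) ℝ, Sq * (Sq⁻¹ * Y) = Y := fun Y => by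
    rw [← Matrix.mul_assoc, h1, Matrix.one_mul]
  have hcan' : ∀ Y : Matrix (Fin q) (Fin n) ℝ, Sq⁻¹ * (Sq * Y) = Y := fun Y => by
    rw [← Matrix.mul_assoc, h2, Matrix.one_mul]
  have hR : R = Sq - C * X * Cᵀ := by rw [hSdef]; abel
  rw [hR]
  simp only [transpose_sub, transpose_mul, transpose_one, transpose_transpose, hSi, hXT,
    Matrix.sub_mul, Matrix.mul_sub, Matrix.add_mul, Matrix.mul_add, Matrix.one_mul,
    Matrix.mul_one, Matrix.mul_assoc, hcan, hcan']
  abel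

lemma ric_id2 (C : Matrix (Fin q) (Fin n) ℝ) (R : Matrix (Fin q) (Fin q) ℝ)
    (X : Matrix (Fin n) (Fin n) ℝ) (Sq : Matrix (Fin q) (Fin q) ℝ)
    (Kt : Matrix (Fin n) (Fin q) ℝ)
    (hXT : Xᵀ = X) (hSi : Sq⁻¹ᵀ = Sq⁻¹) (h1 : Sq * Sq⁻¹ = 1) (h2 : Sq⁻¹ * Sq = 1)
    (hSdef : Sq = C * X * Cᵀ + R) :
    ((1 - Kt * C) * X * (1 - Kt * C)ᵀ + Kt * R * Ktᵀ) - (X - X * Cᵀ * Sq⁻¹ * C * X) =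
      (Kt - X * Cᵀ * Sq⁻¹) * Sq * (Kt - X * Cᵀ * Sq⁻¹)ᵀ := by
  have hcan : ∀ Y : Matrix (Fin q) (Fin n) ℝ, Sq * (Sq⁻¹ * Y) = Y := fun Y => by
    rw [← Matrix.mul_assoc, h1, Matrix.one_mul]
  have hcan' : ∀ Y : Matrix (Fin q) (Fin n) ℝ, Sq⁻¹ * (Sq * Y) = Y := fun Y => by
    rw [← Matrix.mul_assoc, h2, Matrix.one_mul]
  have hR : R = Sq - C * X * Cᵀ := by rw [hSdef]; abel
  rw [hR]
  simp only [transpose_sub, transpose_mul, transpose_one, transpose_transpose, hSi, hXT,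
    Matrix.sub_mul, Matrix.mul_sub, Matrix.add_mul, Matrix.mul_add, Matrix.one_mul,
    Matrix.mul_one, Matrix.mul_assoc, hcan, hcan']
  abel

section Norms

attribute [local instance] Matrix.linftyOpNormedRing Matrix.linftyOpNormedAlgebra
  Matrix.linftyOpNormedAddCommGroup

lemma entry_le_norm (M : Matrix (Fin n) (Fin n) ℂ) (i j : Fin n) : ‖M i j‖ ≤ ‖M‖ := by
  rw [Matrix.linfty_opNorm_def]
  calc ‖M i j‖ ≤ ∑ k, ‖M i k‖ := Finset.single_le_sum (fun k _ => norm_nonneg _) (Finset.mem_univ j)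
    _ = ((∑ k, ‖M i k‖₊ : ℝ≥0) : ℝ) := by push_cast; rfl
    _ ≤ _ := NNReal.coe_le_coe.2 (Finset.le_sup (f := fun i : Fin n => ∑ j, ‖M i j‖₊)
        (Finset.mem_univ i))

lemma entry_geom_bound (M : Matrix (Fin n) (Fin n) ℂ) (hM : spectralRadius ℂ M < 1) :
    ∃ c : ℝ, 1 ≤ c ∧ ∃ r : ℝ, 0 ≤ r ∧ r < 1 ∧ ∀ (k : ℕ) (a b : Fin n), ‖(M ^ k) a b‖ ≤ c * r ^ k := by
  obtain ⟨x0, hx1, hx2⟩ := exists_between hM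
  set x : ℝ≥0∞ := max x0 (1/2) with hxdef
  have hx2' : x < 1 := max_lt hx2 (by norm_num)
  have hxlt : spectralRadius ℂ M < x := lt_of_lt_of_le hx1 (le_max_left _ _)
  have hxne : x ≠ ⊤ := hx2'.ne_top
  have hxpos : 0 < x := lt_of_lt_of_le (by norm_num) (le_max_right _ _)
  set r : ℝ := x.toReal with hrdef
  have hr0 : 0 < r := ENNReal.toReal_pos hxpos.ne' hxne
  have hr1 : r < 1 := by
    rw [hrdef, ← ENNReal.toReal_one]
    exact (ENNReal.toReal_lt_toReal hxne (by simp)).2 hx2'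
  have htend := spectrum.pow_nnnorm_pow_one_div_tendsto_nhds_spectralRadius M
  have hev : ∀ᶠ k : ℕ in atTop, ((‖M ^ k‖₊ : ℝ≥0∞) ^ (1/(k:ℝ))) < x :=
    htend.eventually_lt_const hxlt
  obtain ⟨N, hN⟩ := hev.exists_forall_of_atTop
  have key : ∀ k, max N 1 ≤ k → ‖M ^ k‖ ≤ r ^ k := by
    intro k hk
    have hk1 : (1:ℕ) ≤ k := le_trans (le_max_right _ _) hk
    have hkN : N ≤ k := le_trans (le_max_left _ _) hk
    have h := hN k hkN
    have hkne : (k:ℝ) ≠ 0 := Nat.cast_ne_zero.2 (by omega)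
    have h2 : ((‖M ^ k‖₊ : ℝ≥0∞)) < x ^ (k:ℕ) := by
      have := ENNReal.rpow_lt_rpow h (by positivity : (0:ℝ) < (k:ℝ))
      rwa [← ENNReal.rpow_mul, one_div, inv_mul_cancel₀ hkne,
        ENNReal.rpow_one, ENNReal.rpow_natCast] at this
    have h3 := ENNReal.toReal_mono (ENNReal.pow_ne_top hxne) h2.le
    rwa [ENNReal.coe_toReal, coe_nnnorm, ENNReal.toReal_pow] at h3
  set c : ℝ := (∑ k ∈ Finset.range (max N 1), ‖M ^ k‖ / r ^ k) + 1 with hcdef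
  have hsum_nonneg : 0 ≤ ∑ k ∈ Finset.range (max N 1), ‖M ^ k‖ / r ^ k :=
    Finset.sum_nonneg fun k _ => div_nonneg (norm_nonneg _) (by positivity)
  have hc1 : 1 ≤ c := by rw [hcdef]; linarith
  refine ⟨c, hc1, r, hr0.le, hr1, fun k a b => ?_⟩
  refine le_trans (entry_le_norm _ a b) ?_
  rcases lt_or_ge k (max N 1) with hk | hk
  · have h1 : ‖M ^ k‖ / r ^ k ≤ c := by
      rw [hcdef]
      have : ‖M ^ k‖ / r ^ k ≤ ∑ j ∈ Finset.range (max N 1), ‖M ^ j‖ / r ^ j :=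
        Finset.single_le_sum (fun j _ => div_nonneg (norm_nonneg _) (by positivity))
          (Finset.mem_range.2 hk)
      linarith
    calc ‖M ^ k‖ = (‖M ^ k‖ / r ^ k) * r ^ k := by field_simp
      _ ≤ c * r ^ k := mul_le_mul_of_nonneg_right h1 (by positivity)
  · calc ‖M ^ k‖ ≤ r ^ k := key k hk
      _ ≤ c * r ^ k := le_mul_of_one_le_left (by positivity) hc1

end Norms

end Stmt9Aux

open Stmt9Aux

set_option maxHeartbeats 1000000 in
/-- Under detectability of `(C, A^T)` (existence of a stabilizing gain `K̃`),
the iterates `Φ_T^l(0)` are bounded above in the Loewner order. -/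
theorem stmt_9 {n q : ℕ} (A : Matrix (Fin n) (Fin n) ℝ) (C : Matrix (Fin q) (Fin n) ℝ)
    (Q : Matrix (Fin n) (Fin n) ℝ) (hQ : Q.PosSemidef)
    (R : Matrix (Fin q) (Fin q) ℝ) (hR : R.PosDef)
    (h gt : Matrix (Fin n) (Fin n) ℝ → Matrix (Fin n) (Fin n) ℝ)
    (hh : ∀ X, h X = A * X * Aᵀ + Q)
    (hgt : ∀ X, gt X = X - X * Cᵀ * (C * X * Cᵀ + R)⁻¹ * C * X)
    (T : ℕ) (hT : 1 ≤ T)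
    (Kt : Matrix (Fin n) (Fin q) ℝ)
    (hKt : spectralRadius ℂ ((A ^ T * (1 - Kt * C)).map Complex.ofReal) < 1) :
    ∃ M : Matrix (Fin n) (Fin n) ℝ, M.PosSemidef ∧
      ∀ l : ℕ, (M - (h^[T] ∘ gt)^[l] 0).PosSemidef := by
  classical
  -- basic facts about iterated time updates
  have hIter : ∀ (k : ℕ) (X Z : Matrix (Fin n) (Fin n) ℝ),
      h^[k] (X + Z) = h^[k] X + A ^ k * Z * (A ^ k)ᵀ := by
    intro k
    induction k with
    | zero => intro X Z; simp
    | succ k ih =>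
      intro X Z
      rw [Function.iterate_succ_apply', Function.iterate_succ_apply', ih, hh, hh, pow_succ']
      simp only [Matrix.mul_add, Matrix.add_mul, transpose_mul, Matrix.mul_assoc]
      abel
  have hIterPsd : ∀ (k : ℕ) (X : Matrix (Fin n) (Fin n) ℝ), X.PosSemidef →
      (h^[k] X).PosSemidef := by
    intro k
    induction k with
    | zero => intro X hX; simpa using hX
    | succ k ih =>
      intro X hX
      rw [Function.iterate_succ_apply', hh]
      exact (psd_congr (ih X hX) A).add hQ
  have hIterMono : ∀ (X Y : Matrix (Fin n) (Fin n) ℝ), (Y - X).PosSemidef →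
      (h^[T] Y - h^[T] X).PosSemidef := by
    intro X Y hXY
    have hYX : h^[T] Y = h^[T] X + A ^ T * (Y - X) * (A ^ T)ᵀ := by
      rw [← hIter]; congr 1; abel
    rw [hYX, add_sub_cancel_left]
    exact psd_congr hXY _
  -- facts about the measurement update, for psd X
  have hSfacts : ∀ X : Matrix (Fin n) (Fin n) ℝ, X.PosSemidef →
      (C * X * Cᵀ + R).PosDef := fun X hX => Matrix.PosDef.posSemidef_add (psd_congr hX C) hR
  have hgtPsd : ∀ X : Matrix (Fin n) (Fin n) ℝ, X.PosSemidef → (gt X).PosSemidef := by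
    intro X hX
    have hS := hSfacts X hX
    rw [hgt, ric_id1 C R X (C * X * Cᵀ + R) (real_symm hX.1) (real_symm hS.inv.posSemidef.1)
      (Matrix.mul_nonsing_inv _ ((Matrix.isUnit_iff_isUnit_det _).mp hS.isUnit))
      (Matrix.nonsing_inv_mul _ ((Matrix.isUnit_iff_isUnit_det _).mp hS.isUnit)) rfl]
    exact (psd_congr hX _).add (psd_congr hR.posSemidef _)
  have hgtLe : ∀ X : Matrix (Fin n) (Fin n) ℝ, X.PosSemidef →
      (((1 - Kt * C) * X * (1 - Kt * C)ᵀ + Kt * R * Ktᵀ) - gt X).PosSemidef := by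
    intro X hX
    have hS := hSfacts X hX
    rw [hgt, ric_id2 C R X (C * X * Cᵀ + R) Kt (real_symm hX.1) (real_symm hS.inv.posSemidef.1)
      (Matrix.mul_nonsing_inv _ ((Matrix.isUnit_iff_isUnit_det _).mp hS.isUnit))
      (Matrix.nonsing_inv_mul _ ((Matrix.isUnit_iff_isUnit_det _).mp hS.isUnit)) rfl]
    exact psd_congr hS.posSemidef _
  -- the comparison system
  set F : Matrix (Fin n) (Fin n) ℝ := A ^ T * (1 - Kt * C) with hFdef
  set W : Matrix (Fin n) (Fin n) ℝ := h^[T] (Kt * R * Ktᵀ) with hWdef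
  have hWpsd : W.PosSemidef := hIterPsd T _ (psd_congr hR.posSemidef Kt)
  have hPsi : ∀ X : Matrix (Fin n) (Fin n) ℝ,
      h^[T] ((1 - Kt * C) * X * (1 - Kt * C)ᵀ + Kt * R * Ktᵀ) = W + F * X * Fᵀ := by
    intro X
    rw [add_comm ((1 - Kt * C) * X * (1 - Kt * C)ᵀ), hIter]
    congr 1
    simp only [hFdef, transpose_mul, Matrix.mul_assoc]
  have hPhiLe : ∀ X : Matrix (Fin n) (Fin n) ℝ, X.PosSemidef →
      ((W + F * X * Fᵀ) - h^[T] (gt X)).PosSemidef := by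
    intro X hX
    rw [← hPsi]
    exact hIterMono _ _ (hgtLe X hX)
  set Y : ℕ → Matrix (Fin n) (Fin n) ℝ :=
    fun l => ∑ i ∈ Finset.range l, F ^ i * W * (F ^ i)ᵀ with hYdef
  have hYl : ∀ l, Y l = ∑ i ∈ Finset.range l, F ^ i * W * (F ^ i)ᵀ := fun l => rfl
  have e1 : ∀ i : ℕ, F ^ (i+1) * W * (F ^ (i+1))ᵀ = F * (F ^ i * W * (F ^ i)ᵀ) * Fᵀ := by
    intro i
    simp only [pow_succ', transpose_mul, Matrix.mul_assoc]
  have hYsucc : ∀ l, Y (l + 1) = W + F * Y l * Fᵀ := by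
    intro l
    rw [hYl, hYl, Finset.sum_range_succ',
      Finset.sum_congr rfl (fun i (_ : i ∈ Finset.range l) => e1 i),
      ← Finset.sum_mul, ← Finset.mul_sum]
    simp only [pow_zero, Matrix.one_mul, transpose_one, Matrix.mul_one]
    exact add_comm _ _
  -- main induction
  have hMain : ∀ l : ℕ, ((h^[T] ∘ gt)^[l] 0).PosSemidef ∧
      (Y l - (h^[T] ∘ gt)^[l] 0).PosSemidef := by
    intro l
    induction l with
    | zero =>
      simp only [Function.iterate_zero, id_eq, hYl, Finset.range_zero, Finset.sum_empty, sub_zero]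
      exact ⟨Matrix.PosSemidef.zero, Matrix.PosSemidef.zero⟩
    | succ l ih =>
      obtain ⟨hXpsd, hYX⟩ := ih
      set X := (h^[T] ∘ gt)^[l] 0 with hXdef
      have hstep : (h^[T] ∘ gt)^[l+1] 0 = h^[T] (gt X) := by
        rw [Function.iterate_succ_apply']; rfl
      constructor
      · rw [hstep]
        exact hIterPsd T _ (hgtPsd X hXpsd)
      · have heq : Y (l+1) - (h^[T] ∘ gt)^[l+1] 0 =
            F * (Y l - X) * Fᵀ + ((W + F * X * Fᵀ) - h^[T] (gt X)) := by
          rw [hstep, hYsucc]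
          simp only [Matrix.mul_sub, Matrix.sub_mul]
          abel
        rw [heq]
        exact (psd_congr hYX F).add (hPhiLe X hXpsd)
  -- entrywise geometric bound on the comparison sequence
  obtain ⟨c, hc1, r, hr0, hr1, hgb⟩ := entry_geom_bound (F.map Complex.ofReal) hKt
  have hentry : ∀ (k : ℕ) (a b : Fin n), |(F ^ k) a b| ≤ c * r ^ k := by
    intro k a b
    have hmap : (F ^ k).map Complex.ofReal = (F.map Complex.ofReal) ^ k := by
      have := map_pow (Complex.ofRealHom.mapMatrix) F k
      exact this
    have := hgb k a b
    rw [← hmap] at this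
    simpa [Matrix.map_apply, Complex.norm_real, Real.norm_eq_abs] using this
  set w : ℝ := ∑ u, ∑ v, |W u v| with hwdef
  have hw0 : 0 ≤ w := Finset.sum_nonneg fun u _ => Finset.sum_nonneg fun v _ => abs_nonneg _
  have hWentry : ∀ u v, |W u v| ≤ w := by
    intro u v
    calc |W u v| ≤ ∑ v', |W u v'| := Finset.single_le_sum (f := fun v' => |W u v'|)
          (fun v' _ => abs_nonneg _) (Finset.mem_univ v)
      _ ≤ w := Finset.single_le_sum (f := fun u => ∑ v', |W u v'|)
          (fun u _ => Finset.sum_nonneg fun v' _ => abs_nonneg _) (Finset.mem_univ u)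
  have hc0 : 0 ≤ c := le_trans zero_le_one hc1
  have hcr : ∀ k : ℕ, 0 ≤ c * r ^ k := fun k => mul_nonneg hc0 (pow_nonneg hr0 k)
  have hterm_bound : ∀ (k : ℕ) (a b : Fin n),
      |(F ^ k * W * (F ^ k)ᵀ) a b| ≤ c ^ 2 * w * (r ^ 2) ^ k := by
    intro k a b
    have expand : (F ^ k * W * (F ^ k)ᵀ) a b = ∑ v, (∑ u, (F ^ k) a u * W u v) * (F ^ k) b v := by
      rw [Matrix.mul_apply]
      refine Finset.sum_congr rfl fun v _ => ?_
      rw [Matrix.mul_apply, transpose_apply]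
    rw [expand]
    calc |∑ v, (∑ u, (F ^ k) a u * W u v) * (F ^ k) b v|
        ≤ ∑ v, |(∑ u, (F ^ k) a u * W u v) * (F ^ k) b v| := Finset.abs_sum_le_sum_abs _ _
      _ ≤ ∑ v, (∑ u, (c * r ^ k) * |W u v|) * (c * r ^ k) := by
          refine Finset.sum_le_sum fun v _ => ?_
          rw [abs_mul]
          have h1 : |∑ u, (F ^ k) a u * W u v| ≤ ∑ u, (c * r ^ k) * |W u v| := by
            refine le_trans (Finset.abs_sum_le_sum_abs _ _) (Finset.sum_le_sum fun u _ => ?_)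
            rw [abs_mul]
            exact mul_le_mul_of_nonneg_right (hentry k a u) (abs_nonneg _)
          have h2 : |(F ^ k) b v| ≤ c * r ^ k := hentry k b v
          exact mul_le_mul h1 h2 (abs_nonneg _)
            (Finset.sum_nonneg fun u _ => mul_nonneg (hcr k) (abs_nonneg _))
      _ = c ^ 2 * (r ^ 2) ^ k * ∑ v, ∑ u, |W u v| := by
          rw [Finset.mul_sum]
          refine Finset.sum_congr rfl fun v _ => ?_
          rw [Finset.sum_mul, Finset.mul_sum]
          refine Finset.sum_congr rfl fun u _ => ?_
          rw [← pow_mul, mul_comm 2 k, pow_mul]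
          ring
      _ = c ^ 2 * w * (r ^ 2) ^ k := by rw [hwdef, Finset.sum_comm]; ring
  -- geometric series bound
  have hr2 : r ^ 2 < 1 := by nlinarith
  have hr20 : 0 ≤ r ^ 2 := by positivity
  set γ : ℝ := c ^ 2 * w * (1 - r ^ 2)⁻¹ with hγdef
  have hγ0 : 0 ≤ γ := by
    rw [hγdef]
    exact mul_nonneg (mul_nonneg (sq_nonneg c) hw0) (inv_nonneg.2 (by linarith))
  have hYentry : ∀ l a b, |Y l a b| ≤ γ := by
    intro l a b
    have hsum : Y l a b = ∑ i ∈ Finset.range l, (F ^ i * W * (F ^ i)ᵀ) a b := by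
      rw [hYl]; simp [Matrix.sum_apply]
    rw [hsum]
    calc |∑ i ∈ Finset.range l, (F ^ i * W * (F ^ i)ᵀ) a b|
        ≤ ∑ i ∈ Finset.range l, |(F ^ i * W * (F ^ i)ᵀ) a b| := Finset.abs_sum_le_sum_abs _ _
      _ ≤ ∑ i ∈ Finset.range l, c ^ 2 * w * (r ^ 2) ^ i :=
          Finset.sum_le_sum fun i _ => hterm_bound i a b
      _ = c ^ 2 * w * ∑ i ∈ Finset.range l, (r ^ 2) ^ i := (Finset.mul_sum _ _ _).symm
      _ ≤ γ := by
          rw [hγdef]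
          refine mul_le_mul_of_nonneg_left ?_ (mul_nonneg (sq_nonneg c) hw0)
          calc (∑ i ∈ Finset.range l, (r ^ 2) ^ i) ≤ ∑' i : ℕ, (r ^ 2) ^ i :=
              Summable.sum_le_tsum _ (fun i _ => by positivity)
                (summable_geometric_of_lt_one hr20 hr2)
            _ = (1 - r ^ 2)⁻¹ := tsum_geometric_of_lt_one hr20 hr2
  -- assemble the bound
  refine ⟨((n : ℝ) * γ) • 1, ?_, fun l => ?_⟩
  · have := psd_entry_bound_smul_one_sub (0 : Matrix (Fin n) (Fin n) ℝ) isHermitian_zero γ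
      (fun i j => by simp only [Matrix.zero_apply, abs_zero]; exact hγ0)
    simpa using this
  · obtain ⟨hXpsd, hYX⟩ := hMain l
    have hYherm : (Y l).IsHermitian := by
      have : (Y l).PosSemidef := by
        have := hYX.add hXpsd
        simpa using this
      exact this.1
    have hMY := psd_entry_bound_smul_one_sub (Y l) hYherm γ (fun i j => hYentry l i j)
    have heq : ((n : ℝ) * γ) • (1 : Matrix (Fin n) (Fin n) ℝ) - (h^[T] ∘ gt)^[l] 0 =
        (((n : ℝ) * γ) • 1 - Y l) + (Y l - (h^[T] ∘ gt)^[l] 0) := by abel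
    rw [heq]
    exact hMY.add hYX
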